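/- Let −π < θ_1 < θ_2 ≤ π with θ_2 − θ_1 ≠ π, and let z be a point of the open unit disk such that the four points 0, e^{iθ_1}, e^{iθ_2}, z ∈ ℂ are concyclic (lie on a common circle). Then ∫_{θ_1}^{θ_2} P(z,t) dt = (θ_2 − θ_1)/(2π). Consequently, for the partition of the circle into the two arcs determined by θ_1, θ_2 (the case n = 2) and any strictly convex f with f(1) = 0, the reduced f-divergence distance from z to the origin is 0 even when z ≠ 0. -/

import Mathlib

/-- The Poisson kernel of the unit disk:
`P(z,θ) = (1/(2π)) · (1 − |z|²)/|z − e^{iθ}|²`. -/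
noncomputable def poisson (z : ℂ) (θ : ℝ) : ℝ :=
  (1 / (2 * Real.pi)) * (1 - ‖z‖ ^ 2) /
    ‖z - Complex.exp (θ * Complex.I)‖ ^ 2

lemma helper (N Dn Np : ℝ) (h0 : Dn ≠ 0) (h1 : Dn = 1 - Np) :
    (1 + 2 * (1 / (1 + (N/Dn)^2) * ((Np * Dn - N * N) / Dn^2))) / (2*Real.pi)
      = 1 / (2*Real.pi) * (1 - (Np^2 + N^2)) / (Dn^2 + N^2) := by
  have hdd : Dn^2 + N^2 ≠ 0 := by
    intro h
    exact h0 (by nlinarith [sq_nonneg Dn, sq_nonneg N])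
  have hpi : Real.pi ≠ 0 := Real.pi_ne_zero
  subst h1
  field_simp
  ring

lemma disk_den_pos (x y c s : ℝ) (hxy : x^2 + y^2 < 1) (hsc : c^2 + s^2 = 1) :
    0 < 1 - x*c - y*s := by
  nlinarith [sq_nonneg (x*s - y*c), sq_nonneg (x*c + y*s - 1)]

lemma cross_vanish (a1 a2 b1 b2 x y c1 c2 : ℝ)
    (ha : a1^2 + a2^2 = 1) (hb : b1^2 + b2^2 = 1)
    (h0a : (a1-c1)^2 + (a2-c2)^2 = c1^2 + c2^2)
    (h0b : (b1-c1)^2 + (b2-c2)^2 = c1^2 + c2^2)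
    (h0z : (x-c1)^2 + (y-c2)^2 = c1^2 + c2^2)
    (hD : a1*b2 - a2*b1 ≠ 0) :
    (x*b2 - y*b1)*(1 - x*a1 - y*a2) - (1 - x*b1 - y*b2)*(x*a2 - y*a1) = 0 := by
  set D := a1*b2 - a2*b1 with hDdef
  have e1 : 2*(a1*c1 + a2*c2) = 1 := by nlinarith [h0a, ha]
  have e2 : 2*(b1*c1 + b2*c2) = 1 := by nlinarith [h0b, hb]
  have e3 : x^2 + y^2 = 2*x*c1 + 2*y*c2 := by nlinarith [h0z]
  have hc1 : 2*c1*D = b2 - a2 := by linear_combination b2*e1 - a2*e2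
  have hc2 : 2*c2*D = a1 - b1 := by linear_combination a1*e2 - b1*e1
  apply mul_left_cancel₀ hD
  linear_combination (-D*x)*hc1 + (-D*y)*hc2 + (-D^2)*e3

lemma poisson_hasDerivAt (z : ℂ) (hz : ‖z‖ < 1) (t : ℝ) :
    HasDerivAt (fun u => (u + 2 * Real.arctan ((z.re * Real.sin u - z.im * Real.cos u) /
        (1 - z.re * Real.cos u - z.im * Real.sin u))) / (2 * Real.pi))
      (poisson z t) t := by
  set x := z.re
  set y := z.im
  have hsc : Real.cos t ^ 2 + Real.sin t ^ 2 = 1 := by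
    rw [add_comm]; exact Real.sin_sq_add_cos_sq t
  have hxy : x^2 + y^2 < 1 := by
    have h2 : ‖z‖ ^ 2 < 1 := by nlinarith [norm_nonneg z]
    rw [Complex.sq_norm, Complex.normSq_apply] at h2
    nlinarith [h2]
  have hDpos : 0 < 1 - x * Real.cos t - y * Real.sin t := disk_den_pos x y _ _ hxy hsc
  have hDne : (1 - x * Real.cos t - y * Real.sin t) ≠ 0 := ne_of_gt hDpos
  have hN : HasDerivAt (fun u => x * Real.sin u - y * Real.cos u)
      (x * Real.cos t + y * Real.sin t) t := by
    have := ((Real.hasDerivAt_sin t).const_mul x).sub ((Real.hasDerivAt_cos t).const_mul y)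
    exact this.congr_deriv (by ring)
  have hDen : HasDerivAt (fun u => 1 - x * Real.cos u - y * Real.sin u)
      (x * Real.sin t - y * Real.cos t) t := by
    have := ((hasDerivAt_const t (1:ℝ)).sub ((Real.hasDerivAt_cos t).const_mul x)).sub
      ((Real.hasDerivAt_sin t).const_mul y)
    exact this.congr_deriv (by ring)
  have hq := hN.div hDen hDne
  have harc := (Real.hasDerivAt_arctan
    ((x * Real.sin t - y * Real.cos t)/(1 - x * Real.cos t - y * Real.sin t))).comp t hq
  have hF := ((hasDerivAt_id t).add (harc.const_mul 2)).div_const (2*Real.pi)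
  have hS : ‖z - Complex.exp (t * Complex.I)‖ ^ 2
      = (1 - x * Real.cos t - y * Real.sin t)^2 + (x * Real.sin t - y * Real.cos t)^2 := by
    rw [Complex.sq_norm, Complex.normSq_apply]
    simp only [Complex.sub_re, Complex.sub_im, Complex.exp_ofReal_mul_I_re,
      Complex.exp_ofReal_mul_I_im]
    linear_combination (1 - x^2 - y^2) * hsc
  have hzsq : ‖z‖ ^ 2 = x^2 + y^2 := by
    rw [Complex.sq_norm, Complex.normSq_apply]; ring
  refine hF.congr_deriv (Eq.symm ?_)
  rw [poisson, hS, hzsq]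
  have hXX : x^2 + y^2
      = (x * Real.cos t + y * Real.sin t)^2 + (x * Real.sin t - y * Real.cos t)^2 := by
    linear_combination (- x^2 - y^2) * hsc
  rw [hXX]
  exact (helper (x * Real.sin t - y * Real.cos t) (1 - x * Real.cos t - y * Real.sin t)
    (x * Real.cos t + y * Real.sin t) hDne (by ring)).symm

lemma poisson_continuous (z : ℂ) (hz : ‖z‖ < 1) : Continuous (poisson z) := by
  unfold poisson
  apply Continuous.div continuous_const
  · exact (continuous_norm.comp (continuous_const.sub
      (Complex.continuous_exp.comp (Complex.continuous_ofReal.mul continuous_const)))).pow 2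
  · intro t
    apply pow_ne_zero
    rw [norm_ne_zero_iff, sub_ne_zero]
    intro h
    rw [h, Complex.norm_exp_ofReal_mul_I] at hz
    exact lt_irrefl 1 hz

/-- **Degeneracy of the case `n = 2`.**  Let `−π < θ₁ < θ₂ ≤ π` with `θ₂ − θ₁ ≠ π`,
and let `z` be a point of the open unit disk such that `0, e^{iθ₁}, e^{iθ₂}, z` lie on a
common circle.  Then `∫_{θ₁}^{θ₂} P(z,t) dt = (θ₂ − θ₁)/(2π)`; consequently, for the
two-arc partition determined by `θ₁, θ₂` and any strictly convex `f` with `f(1) = 0`,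
the reduced `f`-divergence distance from `z` to the origin vanishes even when `z ≠ 0`. -/
theorem n_eq_two_degenerate
    (θ₁ θ₂ : ℝ) (h1 : -Real.pi < θ₁) (h12 : θ₁ < θ₂) (h2 : θ₂ ≤ Real.pi)
    (hne : θ₂ - θ₁ ≠ Real.pi)
    (z : ℂ) (hz : ‖z‖ < 1)
    (hcirc : EuclideanGeometry.Cospherical
      ({0, Complex.exp (θ₁ * Complex.I), Complex.exp (θ₂ * Complex.I), z} : Set ℂ)) :
    (∫ t in θ₁..θ₂, poisson z t) = (θ₂ - θ₁) / (2 * Real.pi) ∧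
    ∀ f : ℝ → ℝ, StrictConvexOn ℝ (Set.Ioi 0) f → f 1 = 0 →
      ((θ₂ - θ₁) / (2 * Real.pi)) *
          f ((∫ t in θ₁..θ₂, poisson z t) / ((θ₂ - θ₁) / (2 * Real.pi))) +
        (1 - (θ₂ - θ₁) / (2 * Real.pi)) *
          f ((1 - ∫ t in θ₁..θ₂, poisson z t) / (1 - (θ₂ - θ₁) / (2 * Real.pi))) = 0 := by
  have hpi := Real.pi_pos
  set x := z.re
  set y := z.im
  have hxy : x^2 + y^2 < 1 := by
    have h2 : ‖z‖ ^ 2 < 1 := by nlinarith [norm_nonneg z]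
    rw [Complex.sq_norm, Complex.normSq_apply] at h2
    nlinarith [h2]
  -- the determinant sin (θ₂ - θ₁) ≠ 0
  have hD : Real.cos θ₁ * Real.sin θ₂ - Real.sin θ₁ * Real.cos θ₂ ≠ 0 := by
    have hsin : Real.sin (θ₂ - θ₁) = Real.sin θ₂ * Real.cos θ₁ - Real.cos θ₂ * Real.sin θ₁ :=
      Real.sin_sub θ₂ θ₁
    have hδpos : 0 < θ₂ - θ₁ := by linarith
    have hδlt : θ₂ - θ₁ < 2 * Real.pi := by linarith
    have : Real.sin (θ₂ - θ₁) ≠ 0 := by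
      rcases lt_or_gt_of_ne hne with h | h
      · exact ne_of_gt (Real.sin_pos_of_pos_of_lt_pi hδpos h)
      · have : Real.sin ((θ₂ - θ₁) - 2 * Real.pi) < 0 :=
          Real.sin_neg_of_neg_of_neg_pi_lt (by linarith) (by linarith)
        rw [Real.sin_sub_two_pi] at this
        exact ne_of_lt this
    intro hc
    apply this
    rw [hsin]
    linarith [hc]
  -- extract the circle equations
  obtain ⟨cen, r, hcr⟩ := hcirc
  have sq_dist : ∀ p : ℂ, p ∈ ({0, Complex.exp (θ₁ * Complex.I),
      Complex.exp (θ₂ * Complex.I), z} : Set ℂ) →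
      ((p.re - cen.re)^2 + (p.im - cen.im)^2 = r^2) := by
    intro p hp
    have h := hcr p hp
    have h2 : dist p cen ^ 2 = r ^ 2 := by rw [h]
    rw [Complex.dist_eq, Complex.sq_norm, Complex.normSq_apply] at h2
    simp only [Complex.sub_re, Complex.sub_im] at h2
    linear_combination h2
  have h0 := sq_dist 0 (by simp)
  have hA := sq_dist (Complex.exp (θ₁ * Complex.I)) (by simp)
  have hB := sq_dist (Complex.exp (θ₂ * Complex.I)) (by simp)
  have hZ := sq_dist z (by simp)
  simp only [Complex.zero_re, Complex.zero_im, Complex.exp_ofReal_mul_I_re,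
    Complex.exp_ofReal_mul_I_im] at h0 hA hB hZ
  have hr2 : cen.re^2 + cen.im^2 = r^2 := by linear_combination h0
  -- apply the geometric lemma
  have hG : (x * Real.sin θ₂ - y * Real.cos θ₂) * (1 - x * Real.cos θ₁ - y * Real.sin θ₁)
      - (1 - x * Real.cos θ₂ - y * Real.sin θ₂) * (x * Real.sin θ₁ - y * Real.cos θ₁) = 0 := by
    have := cross_vanish (Real.cos θ₁) (Real.sin θ₁) (Real.cos θ₂) (Real.sin θ₂) x y
      cen.re cen.im (by rw [add_comm]; exact Real.sin_sq_add_cos_sq θ₁)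
      (by rw [add_comm]; exact Real.sin_sq_add_cos_sq θ₂)
      (by rw [hr2]; linear_combination hA) (by rw [hr2]; linear_combination hB)
      (by rw [hr2]; linear_combination hZ) hD
    linear_combination this
  -- positivity of denominators
  have hsc1 : Real.cos θ₁ ^ 2 + Real.sin θ₁ ^ 2 = 1 := by
    rw [add_comm]; exact Real.sin_sq_add_cos_sq θ₁
  have hsc2 : Real.cos θ₂ ^ 2 + Real.sin θ₂ ^ 2 = 1 := by
    rw [add_comm]; exact Real.sin_sq_add_cos_sq θ₂
  have hd1 : 0 < 1 - x * Real.cos θ₁ - y * Real.sin θ₁ := disk_den_pos x y _ _ hxy hsc1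
  have hd2 : 0 < 1 - x * Real.cos θ₂ - y * Real.sin θ₂ := disk_den_pos x y _ _ hxy hsc2
  -- equality of arctan arguments
  have harg : (x * Real.sin θ₂ - y * Real.cos θ₂) / (1 - x * Real.cos θ₂ - y * Real.sin θ₂)
      = (x * Real.sin θ₁ - y * Real.cos θ₁) / (1 - x * Real.cos θ₁ - y * Real.sin θ₁) := by
    rw [div_eq_div_iff (ne_of_gt hd2) (ne_of_gt hd1)]
    linarith [hG]
  -- FTC
  have hkey : (∫ t in θ₁..θ₂, poisson z t) = (θ₂ - θ₁) / (2 * Real.pi) := by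
    rw [intervalIntegral.integral_eq_sub_of_hasDerivAt
      (fun t _ => poisson_hasDerivAt z hz t)
      ((poisson_continuous z hz).intervalIntegrable θ₁ θ₂)]
    rw [harg]
    ring
  refine ⟨hkey, ?_⟩
  intro f _ hf1
  rw [hkey]
  have hδ : 0 < θ₂ - θ₁ := by linarith
  have hp0 : (θ₂ - θ₁) / (2 * Real.pi) ≠ 0 := ne_of_gt (div_pos hδ (by positivity))
  have hp1 : (θ₂ - θ₁) / (2 * Real.pi) < 1 := by
    rw [div_lt_one (by positivity)]
    linarith
  have hp1' : 1 - (θ₂ - θ₁) / (2 * Real.pi) ≠ 0 := by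
    intro h; rw [sub_eq_zero] at h; exact absurd h.symm (ne_of_lt hp1)
  rw [div_self hp0, div_self hp1', hf1]
  ring
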